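/- If all column sums of the (n+1)×(k+1) matrix X equal 1, then the matrix rational parity satisfies Σ_{j=0}^{k} (-1)^j s(δⱼ*X) = s(X) when k+1 is odd, and Σ_{j=0}^{k} (-1)^j s(δⱼ*X) = 0 when k+1 is even, where s denotes the sum of maximal minors. -/

import Mathlib

/-- Sum of all maximal minors of an `N × M` matrix. -/
def minorSum {N M : ℕ} {R : Type*} [CommRing R] (X : Matrix (Fin N) (Fin M) R) : R :=
  ∑ T ∈ (Finset.univ.powersetCard M : Finset (Finset (Fin N))).attach,
    Matrix.det (Matrix.of fun a b =>
      X (T.1.orderEmbOfFin (Finset.mem_powersetCard.mp T.2).2 a) b)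

/-- `delCol X j` is the matrix `X` with its `j`-th column deleted. -/
def delCol {N M : ℕ} {R : Type*} (X : Matrix (Fin N) (Fin (M + 1)) R) (j : Fin (M + 1)) :
    Matrix (Fin N) (Fin M) R :=
  Matrix.of fun i a => X i (j.succAbove a)

namespace MinorSumAux

open Finset Matrix Equiv

variable {n k : ℕ} (X : Matrix (Fin (n + 1)) (Fin (k + 1)) ℝ)

/-- Determinant of the `(k+1)×(k+1)` matrix whose first row is row `i` of `X` and whose
remaining rows are the rows `g a` of `X`. -/
noncomputable def D (i : Fin (n + 1)) (g : Fin k → Fin (n + 1)) : ℝ :=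
  Matrix.det (Matrix.of (Fin.cons (X i) fun a => X (g a)))

lemma laplace (w : Fin k → Fin (n + 1)) :
    ∑ j : Fin (k + 1), (-1 : ℝ) ^ (j : ℕ) *
        Matrix.det (Matrix.of fun a b => X (w a) (j.succAbove b))
      = Matrix.det (Matrix.of (Fin.cons (fun _ => (1 : ℝ)) fun a => X (w a))) := by
  rw [Matrix.det_succ_row_zero]
  refine Finset.sum_congr rfl fun j _ => ?_
  have h0 : (Matrix.of (Fin.cons (fun _ => (1 : ℝ)) fun a => X (w a))) 0 j = 1 := rfl
  rw [h0, mul_one]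
  congr 1

lemma row_one_expand (hcol : ∀ j, ∑ i, X i j = 1) (v : Fin k → Fin (n + 1)) :
    Matrix.det (Matrix.of (Fin.cons (fun _ => (1 : ℝ)) fun a => X (v a)))
      = ∑ i : Fin (n + 1), D X i v := by
  have key : ∀ u : Fin (k + 1) → ℝ,
      Matrix.of (Fin.cons u fun a => X (v a))
        = Matrix.updateRow (Matrix.of (Fin.cons (fun _ => (0 : ℝ)) fun a => X (v a))) 0 u := by
    intro u; ext a b
    refine Fin.cases ?_ ?_ a
    · simp
    · intro a'; simp [Matrix.updateRow_apply, Fin.succ_ne_zero, Fin.cons_succ]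
  have h1 : (fun _ : Fin (k + 1) => (1 : ℝ)) = ∑ i : Fin (n + 1), X i := by
    funext b
    exact ((Finset.sum_apply (a := b) (s := Finset.univ) (g := fun i => X i)).trans (hcol b)).symm
  rw [h1, key]
  have hms := (Matrix.detRowAlternating :
      ((Fin (k + 1)) → ℝ) [⋀^Fin (k + 1)]→ₗ[ℝ] ℝ).toMultilinearMap.map_update_sum
      (Finset.univ : Finset (Fin (n + 1))) (0 : Fin (k + 1)) (fun i => X i)
      (Matrix.of (Fin.cons (fun _ => (0 : ℝ)) fun a => X (v a)))
  convert hms using 2 with i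
  · rfl
  rw [D, key (X i)]
  rfl

lemma D_zero {i : Fin (n + 1)} {S : Finset (Fin (n + 1))} (hS : S.card = k) (hi : i ∈ S) :
    D X i (S.orderEmbOfFin hS) = 0 := by
  obtain ⟨a, ha⟩ : ∃ a, S.orderEmbOfFin hS a = i := by
    have h := S.range_orderEmbOfFin hS
    have : i ∈ Set.range (S.orderEmbOfFin hS) := by rw [h]; exact hi
    exact this
  refine Matrix.det_zero_of_row_eq (i := (0 : Fin (k + 1))) (j := a.succ)
    (Fin.succ_ne_zero a).symm ?_
  funext b
  simp [ha, Fin.cons_succ]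

lemma emb_erase (T : Finset (Fin (n + 1))) (hT : T.card = k + 1) (r : Fin (k + 1))
    (hS : (T.erase (T.orderEmbOfFin hT r)).card = k) (a : Fin k) :
    (T.erase (T.orderEmbOfFin hT r)).orderEmbOfFin hS a
      = T.orderEmbOfFin hT (r.succAbove a) := by
  have hmem : ∀ a : Fin k,
      T.orderEmbOfFin hT (r.succAbove a) ∈ T.erase (T.orderEmbOfFin hT r) := by
    intro a
    refine Finset.mem_erase.mpr ⟨?_, Finset.orderEmbOfFin_mem T hT _⟩
    intro h
    exact (Fin.succAbove_ne r a) ((T.orderEmbOfFin hT).injective h)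
  have hmono : StrictMono fun a : Fin k => T.orderEmbOfFin hT (r.succAbove a) :=
    (T.orderEmbOfFin hT).strictMono.comp (Fin.strictMono_succAbove r)
  exact (congrFun (Finset.orderEmbOfFin_unique hS hmem hmono) a).symm

lemma D_perm (T : Finset (Fin (n + 1))) (hT : T.card = k + 1) (r : Fin (k + 1)) :
    D X (T.orderEmbOfFin hT r) (fun a => T.orderEmbOfFin hT (r.succAbove a))
      = (-1 : ℝ) ^ (r : ℕ) *
        Matrix.det (Matrix.of fun a b => X (T.orderEmbOfFin hT a) b) := by
  set M := Matrix.of fun a b => X (T.orderEmbOfFin hT a) b with hMdef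
  have hM : Matrix.of (Fin.cons (X (T.orderEmbOfFin hT r))
      fun a => X (T.orderEmbOfFin hT (r.succAbove a)))
      = M.submatrix (r.cycleRange.symm : Equiv.Perm (Fin (k + 1))) id := by
    ext a b
    refine Fin.cases ?_ ?_ a
    · simp [hMdef, Fin.cycleRange_symm_zero]
    · intro a'; simp [hMdef, Fin.cycleRange_symm_succ, Fin.cons_succ]
  rw [D, hM, Matrix.det_permute]
  congr 1
  have h1 : Equiv.Perm.sign (r.cycleRange.symm : Equiv.Perm (Fin (k + 1)))
      = (-1 : ℤˣ) ^ (r : ℕ) := by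
    rw [Equiv.Perm.sign_symm, Fin.sign_cycleRange]
  rw [h1]
  push_cast
  rfl

lemma neg_sum (k : ℕ) :
    ∑ r ∈ Finset.range (k + 1), (-1 : ℝ) ^ r = if Even k then 1 else 0 := by
  induction k with
  | zero => simp
  | succ m ih =>
    rw [Finset.sum_range_succ, ih]
    by_cases h : Even m
    · rw [if_pos h, if_neg (by simp [Nat.even_add_one, h])]
      have hodd : (-1 : ℝ) ^ (m + 1) = -1 :=
        Odd.neg_one_pow (Nat.odd_add_one.mpr (Nat.not_odd_iff_even.mpr h))
      rw [hodd]; ring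
    · rw [if_neg h, if_pos (Nat.even_add_one.mpr h)]
      have heven : (-1 : ℝ) ^ (m + 1) = 1 := Even.neg_one_pow (Nat.even_add_one.mpr h)
      rw [heven]; ring

lemma bij :
    ∑ S ∈ (Finset.univ.powersetCard k : Finset (Finset (Fin (n + 1)))).attach,
        ∑ i ∈ S.1ᶜ, D X i (S.1.orderEmbOfFin (Finset.mem_powersetCard.mp S.2).2)
      = ∑ T ∈ (Finset.univ.powersetCard (k + 1) : Finset (Finset (Fin (n + 1)))).attach,
          ∑ r : Fin (k + 1),
            D X (T.1.orderEmbOfFin (Finset.mem_powersetCard.mp T.2).2 r)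
              (fun a => T.1.orderEmbOfFin (Finset.mem_powersetCard.mp T.2).2 (r.succAbove a)) := by
  rw [Finset.sum_sigma', Finset.sum_sigma']
  symm
  refine Finset.sum_bij
    (fun p _ =>
      ⟨⟨p.1.1.erase (p.1.1.orderEmbOfFin (Finset.mem_powersetCard.mp p.1.2).2 p.2),
        Finset.mem_powersetCard.mpr ⟨Finset.subset_univ _, by
          rw [Finset.card_erase_of_mem (Finset.orderEmbOfFin_mem _ _ _),
            (Finset.mem_powersetCard.mp p.1.2).2]
          omega⟩⟩,
        p.1.1.orderEmbOfFin (Finset.mem_powersetCard.mp p.1.2).2 p.2⟩)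
    ?_ ?_ ?_ ?_
  · intro p _
    refine Finset.mem_sigma.mpr ⟨Finset.mem_attach _ _, ?_⟩
    exact Finset.mem_compl.mpr (Finset.notMem_erase _ _)
  · intro p1 hp1 p2 hp2 hEq
    obtain ⟨⟨T1, hT1⟩, r1⟩ := p1
    obtain ⟨⟨T2, hT2⟩, r2⟩ := p2
    simp only [Sigma.ext_iff, Subtype.mk.injEq, heq_eq_eq] at hEq
    obtain ⟨he, ht⟩ := hEq
    have hmem1 := Finset.orderEmbOfFin_mem T1 (Finset.mem_powersetCard.mp hT1).2 r1
    have hmem2 := Finset.orderEmbOfFin_mem T2 (Finset.mem_powersetCard.mp hT2).2 r2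
    have hTT : T1 = T2 := by
      rw [← Finset.insert_erase hmem1, ← Finset.insert_erase hmem2, he, ht]
    subst hTT
    have hr : r1 = r2 :=
      (T1.orderEmbOfFin (Finset.mem_powersetCard.mp hT1).2).injective ht
    subst hr
    rfl
  · rintro ⟨⟨S, hS⟩, i⟩ hq
    have hiS : i ∉ S := by
      have := (Finset.mem_sigma.mp hq).2
      simpa using this
    have hScard : S.card = k := (Finset.mem_powersetCard.mp hS).2
    have hTcard : (insert i S).card = k + 1 := by
      rw [Finset.card_insert_of_notMem hiS, hScard]
    have hTmem : insert i S ∈ (Finset.univ.powersetCard (k + 1) :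
        Finset (Finset (Fin (n + 1)))) :=
      Finset.mem_powersetCard.mpr ⟨Finset.subset_univ _, hTcard⟩
    have hicard : (insert i S).card = k + 1 := (Finset.mem_powersetCard.mp hTmem).2
    obtain ⟨r, hr⟩ : ∃ r, (insert i S).orderEmbOfFin hicard r = i := by
      have h := (insert i S).range_orderEmbOfFin hicard
      have : i ∈ Set.range ((insert i S).orderEmbOfFin hicard) := by
        rw [h]; exact_mod_cast Finset.mem_insert_self i S
      exact this
    refine ⟨⟨⟨insert i S, hTmem⟩, r⟩,
      Finset.mem_sigma.mpr ⟨Finset.mem_attach _ _, Finset.mem_univ _⟩, ?_⟩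
    have h1 : (insert i S).erase ((insert i S).orderEmbOfFin hicard r) = S := by
      rw [hr]; exact Finset.erase_insert hiS
    refine Sigma.ext (Subtype.ext ?_) (heq_of_eq ?_)
    · exact h1
    · exact hr
  · rintro ⟨⟨T, hT⟩, r⟩ -
    show D X _ _ = D X _ _
    congr 1
    funext a
    exact (emb_erase T (Finset.mem_powersetCard.mp hT).2 r _ a).symm

end MinorSumAux

/-- If every column of the `(n+1)×(k+1)` real matrix `X` sums to `1`, then
`Σⱼ (-1)^j s(δⱼ*X)` equals `s(X)` when `k+1` is odd and `0` when `k+1` is even. -/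
theorem minorSum_alternating_delCol (n k : ℕ) (hkn : k ≤ n)
    (X : Matrix (Fin (n + 1)) (Fin (k + 1)) ℝ) (hcol : ∀ j, ∑ i, X i j = 1) :
    ∑ j : Fin (k + 1), (-1) ^ (j : ℕ) * minorSum (delCol X j)
      = if Even k then minorSum X else 0 := by
  classical
  calc
    ∑ j : Fin (k + 1), (-1 : ℝ) ^ (j : ℕ) * minorSum (delCol X j)
        = ∑ j : Fin (k + 1),
            ∑ S ∈ (Finset.univ.powersetCard k : Finset (Finset (Fin (n + 1)))).attach,
              (-1 : ℝ) ^ (j : ℕ) * Matrix.det (Matrix.of fun a b =>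
                X (S.1.orderEmbOfFin (Finset.mem_powersetCard.mp S.2).2 a) (j.succAbove b)) := by
          refine Finset.sum_congr rfl fun j _ => ?_
          rw [minorSum, Finset.mul_sum]
          rfl
    _ = ∑ S ∈ (Finset.univ.powersetCard k : Finset (Finset (Fin (n + 1)))).attach,
          ∑ j : Fin (k + 1),
            (-1 : ℝ) ^ (j : ℕ) * Matrix.det (Matrix.of fun a b =>
              X (S.1.orderEmbOfFin (Finset.mem_powersetCard.mp S.2).2 a) (j.succAbove b)) :=
        Finset.sum_comm
    _ = ∑ S ∈ (Finset.univ.powersetCard k : Finset (Finset (Fin (n + 1)))).attach,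
          ∑ i : Fin (n + 1),
            MinorSumAux.D X i (S.1.orderEmbOfFin (Finset.mem_powersetCard.mp S.2).2) := by
          refine Finset.sum_congr rfl fun S _ => ?_
          rw [MinorSumAux.laplace, MinorSumAux.row_one_expand X hcol]
    _ = ∑ S ∈ (Finset.univ.powersetCard k : Finset (Finset (Fin (n + 1)))).attach,
          ∑ i ∈ S.1ᶜ,
            MinorSumAux.D X i (S.1.orderEmbOfFin (Finset.mem_powersetCard.mp S.2).2) := by
          refine Finset.sum_congr rfl fun S _ => ?_
          refine (Finset.sum_subset (Finset.subset_univ _) fun x _ hx => ?_).symm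
          exact MinorSumAux.D_zero X _ (by simpa using hx)
    _ = ∑ T ∈ (Finset.univ.powersetCard (k + 1) : Finset (Finset (Fin (n + 1)))).attach,
          ∑ r : Fin (k + 1),
            MinorSumAux.D X (T.1.orderEmbOfFin (Finset.mem_powersetCard.mp T.2).2 r)
              (fun a => T.1.orderEmbOfFin (Finset.mem_powersetCard.mp T.2).2 (r.succAbove a)) :=
        MinorSumAux.bij X
    _ = ∑ T ∈ (Finset.univ.powersetCard (k + 1) : Finset (Finset (Fin (n + 1)))).attach,
          ∑ r : Fin (k + 1), (-1 : ℝ) ^ (r : ℕ) * Matrix.det (Matrix.of fun a b =>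
            X (T.1.orderEmbOfFin (Finset.mem_powersetCard.mp T.2).2 a) b) := by
          refine Finset.sum_congr rfl fun T _ => Finset.sum_congr rfl fun r _ => ?_
          exact MinorSumAux.D_perm X T.1 (Finset.mem_powersetCard.mp T.2).2 r
    _ = (∑ r : Fin (k + 1), (-1 : ℝ) ^ (r : ℕ)) * minorSum X := by
          rw [minorSum, Finset.mul_sum]
          refine Finset.sum_congr rfl fun T _ => ?_
          exact (Finset.sum_mul _ _ _).symm
    _ = if Even k then minorSum X else 0 := by
          rw [Fin.sum_univ_eq_sum_range (fun r => (-1 : ℝ) ^ r), MinorSumAux.neg_sum]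
          by_cases h : Even k <;> simp [h]
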